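/- arXiv:1111.0405 — 5 statements merged into one kernel-verified Lean document; each statement's English description precedes it below -/
import Mathlib

section
/- Let 𝒯 be a 2-smooth canonical tester with query probability τ for a linear code C ⊆ GF(2)^N, and let γ ∈ [0,1]. Then for every vector α ∈ GF(2)^N with Δ(α,C)·τ ≤ γ, the rejection probability satisfies s_𝒯(α) ≥ (1−γ)·Δ(α,C)·τ. -/
open Finset
open scoped Classical

/-- Words of length `N` over `GF(2)`. -/
abbrev Word (N : ℕ) := Fin N → ZMod 2

/-- The dual of a set of words: all words orthogonal (over `GF(2)`) to every element. -/
def dualSet {N : ℕ} (C : Set (Word N)) : Set (Word N) :=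
  {x | ∀ c ∈ C, ∑ i, c i * x i = 0}

/-- Hamming distance from a word to a code. -/
noncomputable def distCode {N : ℕ} (C : Set (Word N)) (α : Word N) : ℕ :=
  sInf {d | ∃ c ∈ C, hammingDist α c = d}

lemma parity_bound (m : ℕ) :
    2*(m:ℝ) - (m:ℝ)^2 ≤ (if (m : ZMod 2) = 1 then (1:ℝ) else 0) := by
  have h2 : (2 : ZMod 2) = 0 := by decide
  rcases Nat.even_or_odd m with ⟨k, hk⟩ | ⟨k, hk⟩
  · have h0 : (m : ZMod 2) = 0 := by
      subst hk
      have : ((k + k : ℕ) : ZMod 2) = 2 * (k : ZMod 2) := by push_cast; ring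
      rw [this, h2, zero_mul]
    rw [h0]
    norm_num
    subst hk
    push_cast
    rcases Nat.eq_zero_or_pos k with h | h
    · simp [h]
    · have : (1:ℝ) ≤ (k:ℝ) := by exact_mod_cast h
      nlinarith
  · have h1 : (m : ZMod 2) = 1 := by
      subst hk
      have : ((2*k + 1 : ℕ) : ZMod 2) = 2 * (k : ZMod 2) + 1 := by push_cast; ring
      rw [this, h2, zero_mul, zero_add]
    rw [h1]
    simp only [if_pos rfl]
    subst hk; push_cast
    nlinarith [sq_nonneg (2*(k:ℝ))]

lemma zmod2_ne_zero_iff (x : ZMod 2) : x ≠ 0 ↔ x = 1 := by revert x; decide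

/-- For a `2`-smooth canonical tester `w` with query probability `τ` and any `γ ∈ [0,1]`,
every word `α` with `Δ(α,C)·τ ≤ γ` has rejection probability at least
`(1 − γ)·Δ(α,C)·τ`. -/
theorem stmt4 {N : ℕ} (C : Submodule (ZMod 2) (Word N))
    (w : Word N → ℝ) (hw0 : ∀ q, 0 ≤ w q) (hw1 : ∑ q, w q = 1)
    (hsupp : ∀ q, w q ≠ 0 → q ∈ dualSet (C : Set (Word N)))
    (τ : ℝ)
    (hτ : τ = (∑ q, w q * (hammingNorm q : ℝ)) / (N : ℝ))
    (hsmooth : ∀ i : Fin N,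
      ∑ q ∈ univ.filter (fun q : Word N => q i = 1), w q = τ)
    (h2smooth : ∀ i j : Fin N, i ≠ j →
      ∑ q ∈ univ.filter (fun q : Word N => q i = 1 ∧ q j = 1), w q = τ ^ 2)
    (γ : ℝ) (hγ0 : 0 ≤ γ) (hγ1 : γ ≤ 1)
    (α : Word N) (hα : (distCode (C : Set (Word N)) α : ℝ) * τ ≤ γ) :
    (1 - γ) * ((distCode (C : Set (Word N)) α : ℝ) * τ)
      ≤ ∑ q ∈ univ.filter (fun q : Word N => ∑ i, α i * q i = 1), w q := by
  have hτ0 : 0 ≤ τ := by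
    rw [hτ]
    exact div_nonneg (Finset.sum_nonneg fun q _ =>
      mul_nonneg (hw0 q) (Nat.cast_nonneg _)) (Nat.cast_nonneg _)
  set d : ℕ := distCode (C : Set (Word N)) α with hdDef
  have hne : {d' | ∃ c ∈ (C : Set (Word N)), hammingDist α c = d'}.Nonempty :=
    ⟨hammingDist α 0, 0, C.zero_mem, rfl⟩
  obtain ⟨c, hcC, hcd⟩ := Nat.sInf_mem hne
  set β : Word N := α - c with hβ
  set S : Finset (Fin N) := univ.filter (fun i => β i = 1) with hSdef
  have hcd' : hammingDist α c = d := hcd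
  have hScard : S.card = d := by
    rw [← hcd', hammingDist_eq_hammingNorm]
    unfold hammingNorm
    congr 1
    ext i
    simp [hSdef, zmod2_ne_zero_iff, hβ]
    rw [CharTwo.sub_eq_add (α i) (c i)]
  set m : Word N → ℕ := fun q => (S.filter fun i => q i = 1).card with hm
  -- inner product with α equals parity of m, for dual q
  have hsum : ∀ q ∈ dualSet (C : Set (Word N)),
      (∑ i, α i * q i) = ((m q : ℕ) : ZMod 2) := by
    intro q hq
    have hqc : ∑ i, c i * q i = 0 := hq c hcC
    have hαq : (∑ i, α i * q i) = ∑ i, β i * q i := by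
      have : ∀ i, α i = β i + c i := fun i => by simp [hβ]
      calc (∑ i, α i * q i) = ∑ i, (β i * q i + c i * q i) := by
            refine Finset.sum_congr rfl fun i _ => ?_
            rw [this i]; ring
        _ = (∑ i, β i * q i) + ∑ i, c i * q i := Finset.sum_add_distrib
        _ = ∑ i, β i * q i := by rw [hqc, add_zero]
    rw [hαq]
    have h1 : (∑ i, β i * q i) = ∑ i ∈ S, q i := by
      rw [← Finset.sum_subset (Finset.subset_univ S)]
      · refine Finset.sum_congr rfl fun i hi => ?_
        have : β i = 1 := by simpa [hSdef] using hi
        rw [this, one_mul]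
      · intro i _ hiS
        have : β i = 0 := by
          by_contra h
          exact hiS (by simp [hSdef, (zmod2_ne_zero_iff (β i)).mp h])
        rw [this, zero_mul]
    rw [h1]
    have h2 : (∑ i ∈ S, q i) = ∑ i ∈ S, (if q i = 1 then (1 : ZMod 2) else 0) := by
      refine Finset.sum_congr rfl fun i _ => ?_
      rcases (em (q i = 1)) with h | h
      · simp [h]
      · have : q i = 0 := by
          rcases (em (q i = 0)) with h0 | h0
          · exact h0
          · exact absurd ((zmod2_ne_zero_iff (q i)).mp h0) h
        simp [this, h]
    rw [h2, ← Finset.sum_filter, Finset.sum_const, nsmul_eq_mul, mul_one]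
  -- cast of m as sum of indicators
  have hmcast : ∀ q, ((m q : ℕ) : ℝ) = ∑ i ∈ S, (if q i = 1 then (1:ℝ) else 0) := by
    intro q
    rw [hm]
    push_cast [Finset.card_filter]
    rfl
  -- first moment
  have hA : (∑ q, w q * ((m q : ℕ) : ℝ)) = (d : ℝ) * τ := by
    calc (∑ q, w q * ((m q : ℕ) : ℝ))
        = ∑ q, ∑ i ∈ S, w q * (if q i = 1 then (1:ℝ) else 0) := by
          refine Finset.sum_congr rfl fun q _ => ?_
          rw [hmcast, Finset.mul_sum]
      _ = ∑ i ∈ S, ∑ q, w q * (if q i = 1 then (1:ℝ) else 0) := Finset.sum_comm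
      _ = ∑ i ∈ S, τ := by
          refine Finset.sum_congr rfl fun i _ => ?_
          rw [← hsmooth i, Finset.sum_filter]
          refine Finset.sum_congr rfl fun q _ => ?_
          split <;> simp
      _ = (d : ℝ) * τ := by rw [Finset.sum_const, hScard, nsmul_eq_mul]
  -- second moment
  have hB : (∑ q, w q * ((m q : ℕ) : ℝ)^2)
      = (d : ℝ) * τ + ((d:ℝ)^2 - d) * τ^2 := by
    calc (∑ q, w q * ((m q : ℕ) : ℝ)^2)
        = ∑ q, ∑ i ∈ S, ∑ j ∈ S, w q * (if q i = 1 ∧ q j = 1 then (1:ℝ) else 0) := by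
          refine Finset.sum_congr rfl fun q _ => ?_
          rw [hmcast, sq, Finset.sum_mul_sum]
          rw [Finset.mul_sum]
          refine Finset.sum_congr rfl fun i _ => ?_
          rw [Finset.mul_sum]
          refine Finset.sum_congr rfl fun j _ => ?_
          rw [ite_and]
          split <;> split <;> simp_all
      _ = ∑ i ∈ S, ∑ j ∈ S, ∑ q, w q * (if q i = 1 ∧ q j = 1 then (1:ℝ) else 0) := by
          rw [Finset.sum_comm]
          refine Finset.sum_congr rfl fun i _ => Finset.sum_comm
      _ = ∑ i ∈ S, ∑ j ∈ S, (if i = j then τ else τ^2) := by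
          refine Finset.sum_congr rfl fun i hi => Finset.sum_congr rfl fun j hj => ?_
          rcases em (i = j) with h | h
          · subst h
            simp only [if_pos rfl]
            rw [← hsmooth i, Finset.sum_filter]
            refine Finset.sum_congr rfl fun q _ => ?_
            rcases em (q i = 1) with h' | h' <;> simp [h']
          · rw [if_neg h, ← h2smooth i j h, Finset.sum_filter]
            refine Finset.sum_congr rfl fun q _ => ?_
            split <;> simp_all
      _ = ∑ i ∈ S, ((d:ℝ) * τ^2 + (τ - τ^2)) := by
          refine Finset.sum_congr rfl fun i hi => ?_
          have : ∀ j ∈ S, (if i = j then τ else τ^2)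
              = τ^2 + (if i = j then τ - τ^2 else 0) := by
            intro j _; split <;> ring
          rw [Finset.sum_congr rfl this, Finset.sum_add_distrib,
            Finset.sum_const, Finset.sum_ite_eq, if_pos hi, hScard, nsmul_eq_mul]
      _ = (d : ℝ) * τ + ((d:ℝ)^2 - d) * τ^2 := by
          rw [Finset.sum_const, hScard, nsmul_eq_mul]; ring
  -- pointwise bound
  have hpt : ∀ q : Word N, w q * (2*((m q : ℕ):ℝ) - ((m q : ℕ):ℝ)^2)
      ≤ (if (∑ i, α i * q i) = 1 then w q else 0) := by
    intro q
    rcases em (w q = 0) with h0 | h0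
    · rw [h0]; simp
    · have hq := hsupp q h0
      rw [hsum q hq]
      have hij : (if ((m q : ℕ) : ZMod 2) = 1 then w q else 0)
          = w q * (if ((m q : ℕ) : ZMod 2) = 1 then (1:ℝ) else 0) := by
        split <;> simp
      rw [hij]
      exact mul_le_mul_of_nonneg_left (parity_bound (m q)) (hw0 q)
  -- combine
  have hmain : (d:ℝ) * τ - ((d:ℝ)^2 - d) * τ^2
      ≤ ∑ q ∈ univ.filter (fun q : Word N => ∑ i, α i * q i = 1), w q := by
    rw [Finset.sum_filter]
    calc (d:ℝ) * τ - ((d:ℝ)^2 - d) * τ^2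
        = 2 * ((d:ℝ)*τ) - ((d:ℝ) * τ + ((d:ℝ)^2 - d) * τ^2) := by ring
      _ = ∑ q, w q * (2*((m q : ℕ):ℝ) - ((m q : ℕ):ℝ)^2) := by
          rw [← hB, ← hA]
          rw [Finset.mul_sum, ← Finset.sum_sub_distrib]
          refine Finset.sum_congr rfl fun q _ => ?_
          ring
      _ ≤ _ := Finset.sum_le_sum fun q _ => hpt q
  refine le_trans ?_ hmain
  have hd0 : (0:ℝ) ≤ (d:ℝ) := Nat.cast_nonneg _
  have h1 : ((d:ℝ)*τ)*((d:ℝ)*τ) ≤ γ*((d:ℝ)*τ) :=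
    mul_le_mul_of_nonneg_right hα (mul_nonneg hd0 hτ0)
  have h2 : (0:ℝ) ≤ (d:ℝ)*τ^2 := mul_nonneg hd0 (sq_nonneg τ)
  nlinarith [h1, h2]
end

section
/- Let C ⊆ GF(2)^N be a linear code with minimum distance D, and let ℓ < (D−1)/4. Let 𝒱 be the subspace of functions C^⊥ → ℝ spanned by characters χ_α with Δ(α,C) ≤ ℓ. Then ‖𝒱‖_{2→4} ≤ 3^{ℓ/2}; that is, for every f in 𝒱, E_{p∈C^⊥}[f(p)⁴] ≤ 9^ℓ · (E_{p∈C^⊥}[f(p)²])². -/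
open Finset
open scoped Classical

/-- The character `χ_α(p) = (−1)^{⟨α,p⟩}`. -/
noncomputable def chr {N : ℕ} (α p : Word N) : ℝ :=
  (-1 : ℝ) ^ (∑ i, α i * p i).val

/-- The finite set of codewords of the dual code. -/
noncomputable def dualFinset {N : ℕ} (C : Set (Word N)) : Finset (Word N) :=
  univ.filter (· ∈ dualSet C)

namespace Stmt8Aux

lemma ww {N : ℕ} (p : Word N) : p + p = 0 := by
  ext i; exact CharTwo.add_self_eq_zero _
lemma add_add_cancel {N : ℕ} (a b : Word N) : a + (a + b) = b := by
  rw [← add_assoc, ww, zero_add]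
lemma sum_zmod2 (g : ZMod 2 → ℝ) : ∑ x : ZMod 2, g x = g 0 + g 1 := by
  exact Fin.sum_univ_two g
lemma sum_addL {N : ℕ} (h : Word N → ℝ) (δ : Word N) :
    ∑ β, h (δ + β) = ∑ β, h β :=
  Equiv.sum_comp (Equiv.addLeft δ) h

noncomputable def S2 {N : ℕ} (w : Word N → ℝ) : ℝ := ∑ β, w β ^ 2
noncomputable def S4 {N : ℕ} (w : Word N → ℝ) : ℝ :=
  ∑ β1, ∑ β2, ∑ β3, w β1 * w β2 * w β3 * w (β1 + β2 + β3)
noncomputable def bb {N : ℕ} (w : Word N → ℝ) (γ : Word N) : ℝ := ∑ β, w β * w (β + γ)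

lemma S2_nonneg {N : ℕ} (w : Word N → ℝ) : 0 ≤ S2 w :=
  Finset.sum_nonneg fun _ _ => sq_nonneg _

lemma Tbase {N : ℕ} (u v : Word N → ℝ) :
    ∑ β1, ∑ β2, ∑ β3, u β1 * u β2 * v β3 * v (β1 + β2 + β3)
      = ∑ γ, bb u γ * bb v γ := by
  have step1 : ∀ β1 : Word N,
      (∑ β2, ∑ β3, u β1 * u β2 * v β3 * v (β1 + β2 + β3))
        = ∑ γ, ∑ β3, u β1 * u (β1 + γ) * v β3 * v (γ + β3) := by
    intro β1
    rw [← sum_addL (fun β2 => ∑ β3, u β1 * u β2 * v β3 * v (β1 + β2 + β3)) β1]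
    refine Finset.sum_congr rfl fun γ _ => Finset.sum_congr rfl fun β3 _ => ?_
    rw [add_add_cancel]
  calc ∑ β1, ∑ β2, ∑ β3, u β1 * u β2 * v β3 * v (β1 + β2 + β3)
      = ∑ β1, ∑ γ, ∑ β3, u β1 * u (β1 + γ) * v β3 * v (γ + β3) :=
        Finset.sum_congr rfl fun β1 _ => step1 β1
    _ = ∑ γ, ∑ β1, ∑ β3, u β1 * u (β1 + γ) * v β3 * v (γ + β3) := Finset.sum_comm
    _ = ∑ γ, bb u γ * bb v γ := by
        refine Finset.sum_congr rfl fun γ _ => ?_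
        rw [bb, bb, Finset.sum_mul_sum]
        refine Finset.sum_congr rfl fun β1 _ => Finset.sum_congr rfl fun β3 _ => ?_
        rw [add_comm β3 γ]; ring

lemma S4_eq_sum_sq {N : ℕ} (w : Word N → ℝ) : S4 w = ∑ γ, (bb w γ) ^ 2 := by
  rw [S4, Tbase]; simp [sq]

lemma S4_nonneg {N : ℕ} (w : Word N → ℝ) : 0 ≤ S4 w := by
  rw [S4_eq_sum_sq]; exact Finset.sum_nonneg fun _ _ => sq_nonneg _

lemma Tform_vuuv {N : ℕ} (u v : Word N → ℝ) :
    ∑ β1, ∑ β2, ∑ β3, v β1 * u β2 * u β3 * v (β1 + β2 + β3)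
      = ∑ γ, bb u γ * bb v γ := by
  rw [← Tbase u v]
  calc ∑ β1, ∑ β2, ∑ β3, v β1 * u β2 * u β3 * v (β1 + β2 + β3)
      = ∑ β2, ∑ β1, ∑ β3, v β1 * u β2 * u β3 * v (β1 + β2 + β3) := Finset.sum_comm
    _ = ∑ β2, ∑ β3, ∑ β1, v β1 * u β2 * u β3 * v (β1 + β2 + β3) :=
        Finset.sum_congr rfl fun _ _ => Finset.sum_comm
    _ = ∑ β1, ∑ β2, ∑ β3, u β1 * u β2 * v β3 * v (β1 + β2 + β3) := by
        refine Finset.sum_congr rfl fun β1 _ => Finset.sum_congr rfl fun β2 _ =>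
          Finset.sum_congr rfl fun β3 _ => ?_
        rw [show β3 + β1 + β2 = β1 + β2 + β3 by ring]
        ring

lemma Tform_uvuv {N : ℕ} (u v : Word N → ℝ) :
    ∑ β1, ∑ β2, ∑ β3, u β1 * v β2 * u β3 * v (β1 + β2 + β3)
      = ∑ γ, bb u γ * bb v γ := by
  rw [← Tbase u v]
  calc ∑ β1, ∑ β2, ∑ β3, u β1 * v β2 * u β3 * v (β1 + β2 + β3)
      = ∑ β1, ∑ β3, ∑ β2, u β1 * v β2 * u β3 * v (β1 + β2 + β3) :=
        Finset.sum_congr rfl fun _ _ => Finset.sum_comm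
    _ = ∑ β1, ∑ β2, ∑ β3, u β1 * u β2 * v β3 * v (β1 + β2 + β3) := by
        refine Finset.sum_congr rfl fun β1 _ => Finset.sum_congr rfl fun β2 _ =>
          Finset.sum_congr rfl fun β3 _ => ?_
        rw [show β1 + β3 + β2 = β1 + β2 + β3 by ring]
        ring

lemma cons_add_cons' {N : ℕ} (x y : ZMod 2) (p q : Word N) :
    (Fin.cons x p : Word (N+1)) + Fin.cons y q = Fin.cons (x+y) (p+q) :=
  Matrix.cons_add_cons x p y q

lemma sum_cons {N : ℕ} (h : Word (N+1) → ℝ) :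
    ∑ β, h β = ∑ x : ZMod 2, ∑ β : Word N, h (Fin.cons x β) := by
  rw [← Equiv.sum_comp (Fin.consEquiv fun _ => ZMod 2) h, Fintype.sum_prod_type]
  rfl

lemma bb_comm {N : ℕ} (u v : Word N → ℝ) : ∑ γ, bb v γ * bb u γ = ∑ γ, bb u γ * bb v γ :=
  Finset.sum_congr rfl fun _ _ => mul_comm _ _

lemma S4_split {N : ℕ} (a : Word (N+1) → ℝ) (u v : Word N → ℝ)
    (hu : ∀ β, u β = a (Fin.cons 0 β)) (hv : ∀ β, v β = a (Fin.cons 1 β)) :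
    S4 a = S4 u + 6 * (∑ γ, bb u γ * bb v γ) + S4 v := by
  have expand : S4 a = (∑ β1, ∑ β2, ∑ β3, u β1 * u β2 * u β3 * u (β1 + β2 + β3))
      + ((∑ β1, ∑ β2, ∑ β3, v β1 * u β2 * u β3 * v (β1 + β2 + β3))
       + (∑ β1, ∑ β2, ∑ β3, u β1 * v β2 * u β3 * v (β1 + β2 + β3))
       + (∑ β1, ∑ β2, ∑ β3, u β1 * u β2 * v β3 * v (β1 + β2 + β3))
       + (∑ β1, ∑ β2, ∑ β3, v β1 * v β2 * u β3 * u (β1 + β2 + β3))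
       + (∑ β1, ∑ β2, ∑ β3, v β1 * u β2 * v β3 * u (β1 + β2 + β3))
       + (∑ β1, ∑ β2, ∑ β3, u β1 * v β2 * v β3 * u (β1 + β2 + β3)))
      + (∑ β1, ∑ β2, ∑ β3, v β1 * v β2 * v β3 * v (β1 + β2 + β3)) := by
    rw [S4]
    simp only [sum_cons, sum_zmod2, cons_add_cons',
      show (0:ZMod 2)+0 = 0 from rfl, show (0:ZMod 2)+1 = 1 from rfl,
      show (1:ZMod 2)+0 = 1 from rfl, show (1:ZMod 2)+1 = 0 from rfl,
      ← hu, ← hv, Finset.sum_add_distrib]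
    ring
  have hfold : (∑ β1, ∑ β2, ∑ β3, v β1 * v β2 * v β3 * v (β1 + β2 + β3)) = S4 v := rfl
  have hfoldu : (∑ β1, ∑ β2, ∑ β3, u β1 * u β2 * u β3 * u (β1 + β2 + β3)) = S4 u := rfl
  rw [expand, Tform_vuuv u v, Tform_uvuv u v, Tbase u v,
    Tform_vuuv v u, Tform_uvuv v u, Tbase v u, bb_comm, hfold, hfoldu]
  ring

lemma S2_split {N : ℕ} (a : Word (N+1) → ℝ) (u v : Word N → ℝ)
    (hu : ∀ β, u β = a (Fin.cons 0 β)) (hv : ∀ β, v β = a (Fin.cons 1 β)) :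
    S2 a = S2 u + S2 v := by
  rw [S2, sum_cons, sum_zmod2, ← S2, ← S2]
  simp only [← hu, ← hv]

lemma hammingNorm_cons {N : ℕ} (x : ZMod 2) (β : Word N) :
    hammingNorm (Fin.cons x β : Word (N+1)) = (if x = 0 then 0 else 1) + hammingNorm β := by
  simp only [hammingNorm, Finset.card_filter, Fin.sum_univ_succ, Fin.cons_zero, Fin.cons_succ]
  by_cases hx : x = 0 <;> simp [hx]

lemma le_of_sq_le_sq' {t k : ℝ} (h : t^2 ≤ k^2) (hk : 0 ≤ k) : t ≤ k := by
  nlinarith [sq_nonneg (t - k), sq_nonneg (t + k)]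

lemma bonami : ∀ (N ℓ : ℕ) (w : Word N → ℝ),
    (∀ β, w β ≠ 0 → hammingNorm β ≤ ℓ) → S4 w ≤ 9 ^ ℓ * (S2 w)^2 := by
  intro N
  induction N with
  | zero =>
    intro ℓ w _
    have h9 : (1:ℝ) ≤ 9 ^ ℓ := one_le_pow₀ (by norm_num)
    have h0 : ∀ z : Word 0, w z = w default := fun z => congrArg w (Subsingleton.elim _ _)
    rw [S4, S2]
    rw [Fintype.sum_unique (fun β1 : Word 0 => ∑ β2, ∑ β3, w β1 * w β2 * w β3 * w (β1 + β2 + β3))]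
    rw [Fintype.sum_unique, Fintype.sum_unique, Fintype.sum_unique]
    simp only [h0]
    nlinarith [sq_nonneg (w default), sq_nonneg (w default ^ 2)]
  | succ N ih =>
    intro ℓ a ha
    set u : Word N → ℝ := fun β => a (Fin.cons 0 β) with hu
    set v : Word N → ℝ := fun β => a (Fin.cons 1 β) with hv
    have hu' : ∀ β, u β = a (Fin.cons 0 β) := fun β => rfl
    have hv' : ∀ β, v β = a (Fin.cons 1 β) := fun β => rfl
    have hS4 := S4_split a u v hu' hv'
    have hS2 := S2_split a u v hu' hv'
    have husupp : ∀ β, u β ≠ 0 → hammingNorm β ≤ ℓ := by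
      intro β hβ
      have := ha _ hβ
      rwa [hammingNorm_cons, if_pos rfl, zero_add] at this
    set T : ℝ := ∑ γ, bb u γ * bb v γ with hT
    have hTsq : T ^ 2 ≤ S4 u * S4 v := by
      rw [S4_eq_sum_sq u, S4_eq_sum_sq v]
      exact Finset.sum_mul_sq_le_sq_mul_sq _ _ _
    have h4u0 : 0 ≤ S4 u := S4_nonneg u
    have h4v0 : 0 ≤ S4 v := S4_nonneg v
    have h2u0 : 0 ≤ S2 u := S2_nonneg u
    have h2v0 : 0 ≤ S2 v := S2_nonneg v
    match ℓ with
    | 0 =>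
      have hv0 : ∀ β, v β = 0 := by
        intro β
        by_contra h
        have := ha _ (by exact h)
        rw [hammingNorm_cons] at this
        simp at this
      have hS4v : S4 v = 0 := by simp [S4, hv0]
      have hbbv : ∀ γ, bb v γ = 0 := by intro γ; simp [bb, hv0]
      have hTzero : T = 0 := by simp [hT, hbbv]
      have hS2v : S2 v = 0 := by simp [S2, hv0]
      have := ih 0 u husupp
      rw [hS4, hS2, hS4v, hTzero, hS2v]
      simpa using this
    | (m+1) =>
      have hvsupp : ∀ β, v β ≠ 0 → hammingNorm β ≤ m := by
        intro β hβ
        have := ha _ hβ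
        rw [hammingNorm_cons, if_neg (by norm_num), add_comm] at this
        omega
      have h4u := ih (m+1) u husupp
      have h4v := ih m v hvsupp
      set Q : ℝ := (3:ℝ)^m with hQdef
      have hQ0 : 0 ≤ Q := by positivity
      have h9m : (9:ℝ)^m = Q^2 := by
        rw [hQdef, ← pow_mul, show m*2 = 2*m from mul_comm m 2, pow_mul]
        norm_num
      have h9m1 : (9:ℝ)^(m+1) = 9 * Q^2 := by rw [pow_succ, h9m]; ring
      rw [h9m1] at h4u ⊢
      rw [h9m] at h4v
      have hK0 : (0:ℝ) ≤ 3 * Q^2 * S2 u * S2 v := by positivity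
      have hT2 : T^2 ≤ (3 * Q^2 * S2 u * S2 v)^2 := by
        calc T^2 ≤ S4 u * S4 v := hTsq
          _ ≤ (9 * Q^2 * S2 u ^ 2) * (Q^2 * S2 v ^ 2) := by
              exact mul_le_mul h4u h4v h4v0 (by positivity)
          _ = (3 * Q^2 * S2 u * S2 v)^2 := by ring
      have hTle : T ≤ 3 * Q^2 * S2 u * S2 v := le_of_sq_le_sq' hT2 hK0
      rw [hS4, hS2]
      nlinarith [mul_nonneg (mul_nonneg hQ0 hQ0) (mul_nonneg h2v0 h2v0), sq_nonneg Q,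
        mul_nonneg (sq_nonneg Q) (sq_nonneg (S2 v))]



lemma neg_one_pow_val_add (a b : ZMod 2) :
    ((-1:ℝ)) ^ (a+b).val = (-1)^a.val * (-1)^b.val := by
  rw [ZMod.val_add, ← neg_one_pow_eq_pow_mod_two, pow_add]

lemma chr_add_left {N : ℕ} (α₁ α₂ p : Word N) :
    chr (α₁ + α₂) p = chr α₁ p * chr α₂ p := by
  rw [chr, chr, chr, show (∑ i, (α₁ + α₂) i * p i) = (∑ i, α₁ i * p i) + ∑ i, α₂ i * p i by
    rw [← Finset.sum_add_distrib]; exact Finset.sum_congr rfl fun i _ => by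
      show (α₁ i + α₂ i) * p i = _; ring]
  exact neg_one_pow_val_add _ _

lemma chr_eq_one {N : ℕ} {α p : Word N} (h : ∑ i, α i * p i = 0) : chr α p = 1 := by
  rw [chr, h]; norm_num [show ZMod.val (0:ZMod 2) = 0 from rfl]

lemma chr_eq_neg_one {N : ℕ} {α p : Word N} (h : ∑ i, α i * p i ≠ 0) : chr α p = -1 := by
  have h1 : (∑ i, α i * p i) = 1 := by
    have := h; revert this; generalize (∑ i, α i * p i) = z; revert z; decide
  rw [chr, h1]; norm_num [show ZMod.val (1:ZMod 2) = 1 from rfl]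

lemma chr_zero_left {N : ℕ} (p : Word N) : chr 0 p = 1 :=
  chr_eq_one (by simp)

lemma dual_add_mem {N : ℕ} {C : Set (Word N)} {p q : Word N}
    (hp : p ∈ dualSet C) (hq : q ∈ dualSet C) : p + q ∈ dualSet C := by
  intro c hc
  have := hp c hc
  have := hq c hc
  calc ∑ i, c i * (p + q) i = ∑ i, (c i * p i + c i * q i) := by
        exact Finset.sum_congr rfl fun i _ => by show c i * (p i + q i) = _; ring
    _ = (∑ i, c i * p i) + ∑ i, c i * q i := Finset.sum_add_distrib
    _ = 0 := by rw [hp c hc, hq c hc]; ring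

lemma mem_dualFinset {N : ℕ} {C : Set (Word N)} {p : Word N} :
    p ∈ dualFinset C ↔ p ∈ dualSet C := by simp [dualFinset]

lemma wwp {N : ℕ} (p : Word N) : p + p = 0 := by
  ext i; exact CharTwo.add_self_eq_zero _

lemma sum_chr_zero {N : ℕ} (C : Set (Word N)) (γ p0 : Word N)
    (hp0 : p0 ∈ dualSet C) (hne : ∑ i, γ i * p0 i ≠ 0) :
    ∑ p ∈ dualFinset C, chr γ p = 0 := by
  have key : ∑ p ∈ dualFinset C, chr γ (p + p0) = ∑ p ∈ dualFinset C, chr γ p := by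
    refine Finset.sum_equiv (Equiv.addRight p0) ?_ ?_
    · intro p
      simp only [mem_dualFinset, Equiv.coe_addRight]
      constructor
      · exact fun h => dual_add_mem h hp0
      · intro h
        have := dual_add_mem h hp0
        rwa [add_assoc, wwp, add_zero] at this
    · intro p _; rfl
  have hmul : ∀ p : Word N, chr γ (p + p0) = chr γ p * chr γ p0 := by
    intro p
    rw [chr, chr, chr, show (∑ i, γ i * (p + p0) i) = (∑ i, γ i * p i) + ∑ i, γ i * p0 i by
      rw [← Finset.sum_add_distrib]; exact Finset.sum_congr rfl fun i _ => by
        show γ i * (p i + p0 i) = _; ring]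
    exact neg_one_pow_val_add _ _
  have hneg : chr γ p0 = -1 := chr_eq_neg_one hne
  have : ∑ p ∈ dualFinset C, chr γ p = -∑ p ∈ dualFinset C, chr γ p := by
    conv_lhs => rw [← key]
    simp only [hmul, hneg]
    rw [← Finset.sum_neg_distrib]
    exact Finset.sum_congr rfl fun p _ => by ring
  linarith

lemma bidual {N : ℕ} (C : Submodule (ZMod 2) (Word N)) (γ : Word N)
    (h : ∀ p ∈ dualSet (C : Set (Word N)), ∑ i, γ i * p i = 0) : γ ∈ C := by
  classical
  set b := Pi.basisFun (ZMod 2) (Fin N) with hb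
  have heval : ∀ x y : Word N, b.toDual x y = ∑ i, y i * x i := by
    intro x y
    conv_lhs => rw [← b.sum_repr y]
    rw [map_sum]
    refine Finset.sum_congr rfl fun i _ => ?_
    rw [map_smul, Module.Basis.toDual_apply_left, smul_eq_mul, Pi.basisFun_repr, Pi.basisFun_repr]
  have hγ : γ ∈ Submodule.dualCoannihilator (Submodule.dualAnnihilator C) := by
    rw [Submodule.mem_dualCoannihilator]
    intro ψ hψ
    set x := b.toDualEquiv.symm ψ with hx
    have hψx : ψ = b.toDual x := by
      rw [hx, ← Module.Basis.toDualEquiv_apply, LinearEquiv.apply_symm_apply]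
    have hxdual : x ∈ dualSet (C : Set (Word N)) := by
      intro c hc
      have h0 : ψ c = 0 := (Submodule.mem_dualAnnihilator ψ).mp hψ c hc
      rwa [hψx, heval] at h0
    rw [hψx, heval]
    exact h x hxdual
  rwa [Subspace.dualAnnihilator_dualCoannihilator_eq] at hγ

lemma wt_add_le {N : ℕ} (a b : Word N) :
    hammingNorm (a + b) ≤ hammingNorm a + hammingNorm b := by
  calc hammingNorm (a + b) = hammingDist (a + b) 0 := (hammingDist_zero_right _).symm
    _ ≤ hammingDist (a + b) b + hammingDist b 0 := hammingDist_triangle _ _ _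
    _ = hammingNorm a + hammingNorm b := by
        rw [hammingDist_comm, hammingDist_eq_hammingNorm, add_comm a b, neg_add_cancel_left,
          hammingDist_zero_right]


lemma add_eq_zero_iff' {N : ℕ} (a b : Word N) : a + b = 0 ↔ a = b := by
  constructor
  · intro h
    have h2 : a + b + b = 0 + b := by rw [h]
    rwa [add_assoc, wwp, add_zero, zero_add] at h2
  · intro h; rw [h, wwp]

lemma sum_chr_eq {N : ℕ} (C : Submodule (ZMod 2) (Word N)) (D : ℕ)
    (hD : ∀ c ∈ C, c ≠ 0 → D ≤ hammingNorm c) (δ : Word N) (hδ : hammingNorm δ < D) :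
    ∑ p ∈ dualFinset (C : Set (Word N)), chr δ p
      = if δ = 0 then ((dualFinset (C : Set (Word N))).card : ℝ) else 0 := by
  by_cases h0 : δ = 0
  · rw [if_pos h0, h0]
    rw [Finset.sum_congr rfl fun p _ => chr_zero_left p]
    simp
  · rw [if_neg h0]
    by_cases hall : ∀ p ∈ dualSet (C : Set (Word N)), ∑ i, δ i * p i = 0
    · exact absurd (hD δ (bidual C δ hall) h0) (Nat.not_le.mpr hδ)
    · push_neg at hall
      obtain ⟨p0, hp0, hne⟩ := hall
      exact sum_chr_zero _ δ p0 hp0 hne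

lemma moment2 {N : ℕ} (C : Submodule (ZMod 2) (Word N)) (D : ℕ)
    (hD : ∀ c ∈ C, c ≠ 0 → D ≤ hammingNorm c) (ℓ : ℕ) (hD4 : 4*ℓ < D)
    (w : Word N → ℝ) (hw : ∀ γ, w γ ≠ 0 → hammingNorm γ ≤ ℓ) :
    ∑ p ∈ dualFinset (C : Set (Word N)), (∑ γ, w γ * chr γ p)^2
      = ((dualFinset (C : Set (Word N))).card : ℝ) * S2 w := by
  have step1 : ∀ p, (∑ γ, w γ * chr γ p)^2 = ∑ γ1, ∑ γ2, (w γ1 * w γ2) * chr (γ1+γ2) p := by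
    intro p
    rw [sq, Finset.sum_mul_sum]
    exact Finset.sum_congr rfl fun γ1 _ => Finset.sum_congr rfl fun γ2 _ => by
      rw [chr_add_left]; ring
  calc ∑ p ∈ dualFinset (C : Set (Word N)), (∑ γ, w γ * chr γ p)^2
      = ∑ p ∈ dualFinset (C : Set (Word N)), ∑ γ1, ∑ γ2, (w γ1 * w γ2) * chr (γ1+γ2) p :=
        Finset.sum_congr rfl fun p _ => step1 p
    _ = ∑ γ1, ∑ γ2, (w γ1 * w γ2) * ∑ p ∈ dualFinset (C : Set (Word N)), chr (γ1+γ2) p := by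
        rw [Finset.sum_comm]
        refine Finset.sum_congr rfl fun γ1 _ => ?_
        rw [Finset.sum_comm]
        exact Finset.sum_congr rfl fun γ2 _ => (Finset.mul_sum _ _ _).symm
    _ = ∑ γ1, ∑ γ2, (w γ1 * w γ2) *
          (if γ1 = γ2 then ((dualFinset (C : Set (Word N))).card : ℝ) else 0) := by
        refine Finset.sum_congr rfl fun γ1 _ => Finset.sum_congr rfl fun γ2 _ => ?_
        by_cases h1 : w γ1 = 0
        · simp [h1]
        by_cases h2 : w γ2 = 0
        · simp [h2]
        have hwt : hammingNorm (γ1 + γ2) < D := by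
          have u1 := hw γ1 h1
          have u2 := hw γ2 h2
          have := wt_add_le γ1 γ2
          omega
        rw [sum_chr_eq C D hD _ hwt]
        congr 1
        simp [add_eq_zero_iff']
    _ = ((dualFinset (C : Set (Word N))).card : ℝ) * S2 w := by
        rw [S2, Finset.mul_sum]
        refine Finset.sum_congr rfl fun γ1 _ => ?_
        simp only [mul_ite, mul_zero]
        rw [Finset.sum_ite_eq]
        simp
        ring

lemma moment4 {N : ℕ} (C : Submodule (ZMod 2) (Word N)) (D : ℕ)
    (hD : ∀ c ∈ C, c ≠ 0 → D ≤ hammingNorm c) (ℓ : ℕ) (hD4 : 4*ℓ < D)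
    (w : Word N → ℝ) (hw : ∀ γ, w γ ≠ 0 → hammingNorm γ ≤ ℓ) :
    ∑ p ∈ dualFinset (C : Set (Word N)), (∑ γ, w γ * chr γ p)^4
      = ((dualFinset (C : Set (Word N))).card : ℝ) * S4 w := by
  have sq2 : ∀ p, (∑ γ, w γ * chr γ p)^2 = ∑ γ1, ∑ γ2, (w γ1 * w γ2) * chr (γ1+γ2) p := by
    intro p
    rw [sq, Finset.sum_mul_sum]
    exact Finset.sum_congr rfl fun γ1 _ => Finset.sum_congr rfl fun γ2 _ => by
      rw [chr_add_left]; ring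
  have step1 : ∀ p, (∑ γ, w γ * chr γ p)^4
      = ∑ γ1, ∑ γ2, ∑ γ3, ∑ γ4, (w γ1 * w γ2 * w γ3 * w γ4) * chr (γ1+γ2+γ3+γ4) p := by
    intro p
    calc (∑ γ, w γ * chr γ p)^4 = ((∑ γ, w γ * chr γ p)^2)^2 := by ring
      _ = (∑ γ1, ∑ γ2, (w γ1 * w γ2) * chr (γ1+γ2) p)^2 := by rw [sq2]
      _ = ∑ γ1, ∑ γ3, (∑ γ2, (w γ1 * w γ2) * chr (γ1+γ2) p) *
            (∑ γ4, (w γ3 * w γ4) * chr (γ3+γ4) p) := by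
          rw [sq, Finset.sum_mul_sum]
      _ = ∑ γ1, ∑ γ3, ∑ γ2, ∑ γ4, (w γ1 * w γ2 * w γ3 * w γ4) * chr (γ1+γ2+γ3+γ4) p := by
          refine Finset.sum_congr rfl fun γ1 _ => Finset.sum_congr rfl fun γ3 _ => ?_
          rw [Finset.sum_mul_sum]
          refine Finset.sum_congr rfl fun γ2 _ => Finset.sum_congr rfl fun γ4 _ => ?_
          rw [show γ1+γ2+γ3+γ4 = (γ1+γ2)+(γ3+γ4) by ring, chr_add_left (γ1+γ2) (γ3+γ4) p]
          ring
      _ = ∑ γ1, ∑ γ2, ∑ γ3, ∑ γ4, (w γ1 * w γ2 * w γ3 * w γ4) * chr (γ1+γ2+γ3+γ4) p :=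
          Finset.sum_congr rfl fun γ1 _ => Finset.sum_comm
  calc ∑ p ∈ dualFinset (C : Set (Word N)), (∑ γ, w γ * chr γ p)^4
      = ∑ p ∈ dualFinset (C : Set (Word N)), ∑ γ1, ∑ γ2, ∑ γ3, ∑ γ4,
          (w γ1 * w γ2 * w γ3 * w γ4) * chr (γ1+γ2+γ3+γ4) p :=
        Finset.sum_congr rfl fun p _ => step1 p
    _ = ∑ γ1, ∑ γ2, ∑ γ3, ∑ γ4, (w γ1 * w γ2 * w γ3 * w γ4) *
          ∑ p ∈ dualFinset (C : Set (Word N)), chr (γ1+γ2+γ3+γ4) p := by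
        rw [Finset.sum_comm]
        refine Finset.sum_congr rfl fun γ1 _ => ?_
        rw [Finset.sum_comm]
        refine Finset.sum_congr rfl fun γ2 _ => ?_
        rw [Finset.sum_comm]
        refine Finset.sum_congr rfl fun γ3 _ => ?_
        rw [Finset.sum_comm]
        exact Finset.sum_congr rfl fun γ4 _ => (Finset.mul_sum _ _ _).symm
    _ = ∑ γ1, ∑ γ2, ∑ γ3, ∑ γ4, (w γ1 * w γ2 * w γ3 * w γ4) *
          (if γ1+γ2+γ3 = γ4 then ((dualFinset (C : Set (Word N))).card : ℝ) else 0) := by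
        refine Finset.sum_congr rfl fun γ1 _ => Finset.sum_congr rfl fun γ2 _ =>
          Finset.sum_congr rfl fun γ3 _ => Finset.sum_congr rfl fun γ4 _ => ?_
        by_cases h1 : w γ1 = 0
        · simp [h1]
        by_cases h2 : w γ2 = 0
        · simp [h2]
        by_cases h3 : w γ3 = 0
        · simp [h3]
        by_cases h4 : w γ4 = 0
        · simp [h4]
        have hwt : hammingNorm (γ1 + γ2 + γ3 + γ4) < D := by
          have u1 := hw γ1 h1
          have u2 := hw γ2 h2
          have u3 := hw γ3 h3
          have u4 := hw γ4 h4
          have t1 := wt_add_le γ1 γ2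
          have t2 := wt_add_le (γ1+γ2) γ3
          have t3 := wt_add_le (γ1+γ2+γ3) γ4
          omega
        rw [sum_chr_eq C D hD _ hwt]
        congr 1
        simp [add_eq_zero_iff']
    _ = ((dualFinset (C : Set (Word N))).card : ℝ) * S4 w := by
        rw [S4, Finset.mul_sum]
        refine Finset.sum_congr rfl fun γ1 _ => ?_
        rw [Finset.mul_sum]
        refine Finset.sum_congr rfl fun γ2 _ => ?_
        rw [Finset.mul_sum]
        refine Finset.sum_congr rfl fun γ3 _ => ?_
        simp only [mul_ite, mul_zero]
        rw [Finset.sum_ite_eq]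
        simp
        ring



end Stmt8Aux

open Stmt8Aux

/-- Hypercontractivity over the dual of a distance-`D` code: if `ℓ < (D−1)/4` and `f`
lies in the span of the characters `χ_α` with `Δ(α,C) ≤ ℓ`, then
`E_{p∈C^⊥}[f(p)⁴] ≤ 9^ℓ (E_{p∈C^⊥}[f(p)²])²` (i.e. `‖𝒱‖_{2→4} ≤ 3^{ℓ/2}`). -/
theorem stmt8 {N : ℕ} (C : Submodule (ZMod 2) (Word N)) (D : ℕ)
    (hD : ∀ c ∈ C, c ≠ 0 → D ≤ hammingNorm c)
    (ℓ : ℕ) (hℓ : (ℓ : ℝ) < ((D : ℝ) - 1) / 4)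
    (f : Word N → ℝ)
    (hf : f ∈ Submodule.span ℝ
      {g : Word N → ℝ | ∃ α : Word N, distCode (C : Set (Word N)) α ≤ ℓ ∧ g = chr α}) :
    (∑ p ∈ dualFinset (C : Set (Word N)), f p ^ 4) /
        ((dualFinset (C : Set (Word N))).card : ℝ)
      ≤ (9 : ℝ) ^ ℓ *
        ((∑ p ∈ dualFinset (C : Set (Word N)), f p ^ 2) /
            ((dualFinset (C : Set (Word N))).card : ℝ)) ^ 2 := by
  classical
  set F := dualFinset (C : Set (Word N)) with hF
  -- numeric bound : 4ℓ < D
  have hD4 : 4 * ℓ < D := by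
    have h1 : (4 * ℓ : ℝ) < (D : ℝ) - 1 := by linarith
    have h2 : ((4 * ℓ : ℕ) : ℝ) < (D : ℝ) := by push_cast; linarith
    exact_mod_cast h2
  -- extract a representation of f
  obtain ⟨n, d, g, hrep⟩ := Submodule.mem_span_set'.mp hf
  choose α hα hgα using fun i => (g i).2
  have hc : ∀ i, ∃ c, c ∈ (C : Set (Word N)) ∧ hammingDist (α i) c = distCode (C : Set (Word N)) (α i) := by
    intro i
    have hne : {d | ∃ c ∈ (C : Set (Word N)), hammingDist (α i) c = d}.Nonempty :=
      ⟨hammingDist (α i) 0, 0, C.zero_mem, rfl⟩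
    exact Nat.sInf_mem hne
  choose c hcC hcd using hc
  set β : Fin n → Word N := fun i => α i + c i with hβ
  have hβwt : ∀ i, hammingNorm (β i) ≤ ℓ := by
    intro i
    have hsub : -α i + c i = α i + c i := by
      ext j
      show -α i j + c i j = α i j + c i j
      rw [CharTwo.neg_eq]
    have : hammingNorm (β i) = hammingDist (α i) (c i) := by
      rw [hammingDist_eq_hammingNorm, hsub]
    rw [this, hcd i]
    exact hα i
  have hchr : ∀ i, ∀ p ∈ dualSet (C : Set (Word N)), chr (β i) p = (g i : Word N → ℝ) p := by
    intro i p hp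
    rw [hgα i]
    rw [show β i = α i + c i from rfl, chr_add_left]
    rw [chr_eq_one (hp (c i) (hcC i)), mul_one]
  set w : Word N → ℝ := fun γ => ∑ i ∈ univ.filter (fun i => β i = γ), d i with hw
  have hwsupp : ∀ γ, w γ ≠ 0 → hammingNorm γ ≤ ℓ := by
    intro γ h
    have hne : (univ.filter (fun i => β i = γ)).Nonempty := by
      by_contra h'
      rw [Finset.not_nonempty_iff_eq_empty] at h'
      apply h
      rw [hw]
      simp [h']
    obtain ⟨i, hi⟩ := hne
    rw [Finset.mem_filter] at hi
    rw [← hi.2]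
    exact hβwt i
  have hfp : ∀ p ∈ dualSet (C : Set (Word N)), f p = ∑ γ, w γ * chr γ p := by
    intro p hp
    rw [← hrep]
    rw [Finset.sum_apply]
    calc ∑ i, (d i • (g i : Word N → ℝ)) p = ∑ i, d i * chr (β i) p := by
          refine Finset.sum_congr rfl fun i _ => ?_
          rw [Pi.smul_apply, smul_eq_mul, hchr i p hp]
      _ = ∑ γ, ∑ i ∈ univ.filter (fun i => β i = γ), d i * chr (β i) p :=
          (Finset.sum_fiberwise_of_maps_to (fun i _ => Finset.mem_univ (β i)) _).symm
      _ = ∑ γ, w γ * chr γ p := by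
          refine Finset.sum_congr rfl fun γ _ => ?_
          rw [hw, Finset.sum_mul]
          refine Finset.sum_congr rfl fun i hi => ?_
          rw [Finset.mem_filter] at hi
          rw [hi.2]
  have hFmem : ∀ p, p ∈ F ↔ p ∈ dualSet (C : Set (Word N)) := fun p => mem_dualFinset
  have hm4 : ∑ p ∈ F, f p ^ 4 = (F.card : ℝ) * S4 w := by
    rw [show ∑ p ∈ F, f p ^ 4 = ∑ p ∈ F, (∑ γ, w γ * chr γ p)^4 from
      Finset.sum_congr rfl fun p hp => by rw [hfp p ((hFmem p).mp hp)]]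
    exact moment4 C D hD ℓ hD4 w hwsupp
  have hm2 : ∑ p ∈ F, f p ^ 2 = (F.card : ℝ) * S2 w := by
    rw [show ∑ p ∈ F, f p ^ 2 = ∑ p ∈ F, (∑ γ, w γ * chr γ p)^2 from
      Finset.sum_congr rfl fun p hp => by rw [hfp p ((hFmem p).mp hp)]]
    exact moment2 C D hD ℓ hD4 w hwsupp
  have hcard : (0:ℝ) < (F.card : ℝ) := by
    have h0F : (0 : Word N) ∈ F := by
      rw [hFmem]
      intro cw hcw
      simp
    have := Finset.card_pos.mpr ⟨0, h0F⟩
    exact_mod_cast this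
  have hc' : ((F.card : ℝ)) ≠ 0 := ne_of_gt hcard
  rw [hm4, hm2, mul_div_cancel_left₀ _ hc', mul_div_cancel_left₀ _ hc']
  exact bonami N ℓ w hwsupp
end

section
/- Let μ_α ∈ [−1,1] satisfy μ_α = 1 − kτ + θ k²τ² for some |θ| ≤ 1, where k ≥ 1, τ > 0, kτ ≤ 1. Let t = ε/τ and λ_α = e^{−t(1−μ_α)}, ρ = e^{−ε}. Then for every δ < δ₀ (an absolute constant), if k < δ²/τ then |λ_α − ρ^k| ≤ δ. -/
set_option maxHeartbeats 1000000

private lemma aux_abs_exp_sub_one (x : ℝ) : |Real.exp x - 1| ≤ |x| * Real.exp |x| := by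
  rcases le_or_gt 0 x with hx | hx
  · rw [abs_of_nonneg hx, abs_of_nonneg (by linarith [Real.one_le_exp hx] : (0:ℝ) ≤ Real.exp x - 1)]
    have hprod : Real.exp (-x) * Real.exp x = 1 := by rw [← Real.exp_add]; simp
    nlinarith [mul_le_mul_of_nonneg_right (Real.add_one_le_exp (-x)) (Real.exp_pos x).le, hprod]
  · rw [abs_of_neg hx, abs_of_nonpos (by linarith [Real.exp_lt_one_iff.mpr hx] : Real.exp x - 1 ≤ 0)]
    have h1 := Real.add_one_le_exp x
    have h2 := Real.one_le_exp (le_of_lt (neg_pos.mpr hx))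
    nlinarith

private lemma aux_u_exp (c u : ℝ) (hc : 0 < c) (hu : 0 ≤ u) :
    u * Real.exp (-(c * u)) ≤ 1 / c * Real.exp (-1) := by
  have h : c * u ≤ Real.exp (c * u - 1) := by
    have := Real.add_one_le_exp (c * u - 1); linarith
  have hexp : Real.exp (c * u - 1) * Real.exp (-(c * u)) = Real.exp (-1) := by
    rw [← Real.exp_add]; ring_nf
  have h2 : c * u * Real.exp (-(c * u)) ≤ Real.exp (-1) := by
    calc c * u * Real.exp (-(c * u)) ≤ Real.exp (c * u - 1) * Real.exp (-(c * u)) :=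
          mul_le_mul_of_nonneg_right h (Real.exp_pos _).le
      _ = Real.exp (-1) := hexp
  have heq : u * Real.exp (-(c * u)) = (1 / c) * (c * u * Real.exp (-(c * u))) := by
    field_simp
  rw [heq]
  exact mul_le_mul_of_nonneg_left h2 (by positivity)

/-- Spectrum of the continuous-time walk matches the noisy cube: there is an absolute
constant `δ₀ > 0` such that whenever `μα = 1 − kτ + θ k² τ²` with `|θ| ≤ 1`, `k ≥ 1`,
`0 < τ`, `kτ ≤ 1`, `μα ∈ [−1,1]`, and `k < δ²/τ` with `0 < δ < δ₀`, the eigenvalue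
`λα = e^{−t(1−μα)}` of the continuous-time walk with `t = ε/τ` satisfies
`|λα − ρ^k| ≤ δ` where `ρ = e^{−ε}`. -/
theorem stmt15 :
    ∃ δ₀ : ℝ, 0 < δ₀ ∧
      ∀ (δ ε τ θ μα : ℝ) (k : ℕ),
        0 < δ → δ < δ₀ → 0 < ε → 0 < τ → 1 ≤ k → (k : ℝ) * τ ≤ 1 →
        |θ| ≤ 1 → -1 ≤ μα → μα ≤ 1 →
        μα = 1 - (k : ℝ) * τ + θ * (k : ℝ) ^ 2 * τ ^ 2 →
        (k : ℝ) < δ ^ 2 / τ →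
        |Real.exp (-(ε / τ) * (1 - μα)) - Real.exp (-ε) ^ k| ≤ δ := by
  refine ⟨1/2, by norm_num, ?_⟩
  intro δ ε τ θ μα k hδ hδ₀ hε hτ hk hkτ hθ hμ1 hμ2 hμ hkδ
  have hkpos : (0:ℝ) < (k:ℝ) := by exact_mod_cast Nat.lt_of_lt_of_le Nat.zero_lt_one hk
  set u : ℝ := ε * k with hu
  set x : ℝ := ε * θ * (k:ℝ)^2 * τ with hxdef
  have hupos : 0 < u := mul_pos hε hkpos
  -- rewrite the exponents
  have hτ' : τ ≠ 0 := ne_of_gt hτ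
  have harg : -(ε / τ) * (1 - μα) = -u + x := by
    rw [hμ, hu, hxdef]; field_simp; ring
  have hpow : Real.exp (-ε) ^ k = Real.exp (-u) := by
    rw [← Real.exp_nat_mul, hu]; ring_nf
  rw [harg, hpow]
  have hsplit : Real.exp (-u + x) - Real.exp (-u) = Real.exp (-u) * (Real.exp x - 1) := by
    rw [Real.exp_add]; ring
  rw [hsplit, abs_mul, abs_of_pos (Real.exp_pos _)]
  -- bound |x|
  have hkτδ : (k:ℝ) * τ < δ^2 := (lt_div_iff₀ hτ).mp hkδ
  have hxb : |x| ≤ u * δ^2 := by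
    have : |x| = ε * |θ| * (k:ℝ)^2 * τ := by
      rw [hxdef, abs_mul, abs_mul, abs_mul, abs_of_pos hε, abs_of_pos hτ,
        abs_of_pos (pow_pos hkpos 2)]
    rw [this, hu]
    have h1 : ε * |θ| * (k:ℝ)^2 * τ ≤ ε * 1 * (k:ℝ)^2 * τ := by
      have : (0:ℝ) ≤ ε * ((k:ℝ)^2 * τ) := by positivity
      nlinarith
    nlinarith [hkτδ, mul_pos hε hkpos]
  -- main estimate
  have hδ2 : δ^2 < 1/2 := by nlinarith
  have hstep : Real.exp (-u) * |Real.exp x - 1| ≤ δ^2 * (u * Real.exp (-((1 - δ^2) * u))) := by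
    calc Real.exp (-u) * |Real.exp x - 1|
        ≤ Real.exp (-u) * (|x| * Real.exp |x|) := by
          exact mul_le_mul_of_nonneg_left (aux_abs_exp_sub_one x) (Real.exp_pos _).le
      _ ≤ Real.exp (-u) * ((u * δ^2) * Real.exp (u * δ^2)) := by
          apply mul_le_mul_of_nonneg_left _ (Real.exp_pos _).le
          apply mul_le_mul hxb (Real.exp_le_exp.mpr hxb) (Real.exp_pos _).le
          positivity
      _ = δ^2 * (u * (Real.exp (-u) * Real.exp (u * δ^2))) := by ring
      _ = δ^2 * (u * Real.exp (-((1 - δ^2) * u))) := by rw [← Real.exp_add]; ring_nf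
  have hc : (0:ℝ) < 1 - δ^2 := by linarith
  have hmax := aux_u_exp (1 - δ^2) u hc hupos.le
  have hcb : 1 / (1 - δ^2) ≤ 2 := by
    rw [div_le_iff₀ hc]; nlinarith
  have hexpinv : Real.exp (-1) ≤ 1/2 := by
    rw [Real.exp_neg]
    rw [inv_le_comm₀ (Real.exp_pos 1) (by norm_num)]
    calc (1/2 : ℝ)⁻¹ = 2 := by norm_num
      _ ≤ Real.exp 1 := by linarith [Real.add_one_le_exp 1]
  have hfinal : δ^2 * (u * Real.exp (-((1 - δ^2) * u))) ≤ δ := by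
    have h1 : u * Real.exp (-((1 - δ^2) * u)) ≤ 1/(1 - δ^2) * Real.exp (-1) := hmax
    have h2 : 1/(1 - δ^2) * Real.exp (-1) ≤ 2 * (1/2) := by
      apply mul_le_mul hcb hexpinv (Real.exp_pos _).le (by norm_num)
    have h3 : u * Real.exp (-((1 - δ^2) * u)) ≤ 1 := by linarith
    have h4 : δ^2 * (u * Real.exp (-((1 - δ^2) * u))) ≤ δ^2 * 1 :=
      mul_le_mul_of_nonneg_left h3 (sq_nonneg δ)
    have h5 : δ^2 ≤ δ := by nlinarith
    linarith [h4, h5]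
  linarith [hstep]
end

section
/- Suppose a labelling ℓ: D → H of the unique games instance Γ(C,𝒯) (with vertex set D = C^⊥, alphabet the subcode H ⊆ D, and constraints 'ℓ(c+q+h) − ℓ(c+h') = h − h'' for random c ∈ D, h,h' ∈ H, q ∼ 𝒯) satisfies a θ fraction of constraints. Define f_p(c) = E_{h∈H}[1[ℓ(c+h) = p+h]] for each p ∈ H. Then θ = Σ_{p∈H} ⟨f_p, G f_p⟩ where G = Cay(C^⊥,𝒯), each f_p takes values in [0,1], and E_{c∈D}[f_p(c)] = 1/|H| for every p ∈ H. -/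
open Finset
open scoped Classical

/-- The finite set of elements of a subgroup. -/
noncomputable def grpFinset {N : ℕ} (H : AddSubgroup (Word N)) : Finset (Word N) :=
  univ.filter (· ∈ H)

private lemma aux_swap5 {α β γ δ : Type*} [Fintype γ] (D' : Finset α) (H' : Finset β)
    (P : Finset δ) (G : α → β → β → γ → δ → ℝ) :
    ∑ c ∈ D', ∑ h ∈ H', ∑ h' ∈ H', ∑ q, ∑ p ∈ P, G c h h' q p
      = ∑ p ∈ P, ∑ c ∈ D', ∑ h ∈ H', ∑ h' ∈ H', ∑ q, G c h h' q p := by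
  calc ∑ c ∈ D', ∑ h ∈ H', ∑ h' ∈ H', ∑ q, ∑ p ∈ P, G c h h' q p
      = ∑ c ∈ D', ∑ h ∈ H', ∑ h' ∈ H', ∑ p ∈ P, ∑ q, G c h h' q p :=
        Finset.sum_congr rfl fun c _ => Finset.sum_congr rfl fun h _ =>
          Finset.sum_congr rfl fun h' _ => Finset.sum_comm
    _ = ∑ c ∈ D', ∑ h ∈ H', ∑ p ∈ P, ∑ h' ∈ H', ∑ q, G c h h' q p :=
        Finset.sum_congr rfl fun c _ => Finset.sum_congr rfl fun h _ => Finset.sum_comm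
    _ = ∑ c ∈ D', ∑ p ∈ P, ∑ h ∈ H', ∑ h' ∈ H', ∑ q, G c h h' q p :=
        Finset.sum_congr rfl fun c _ => Finset.sum_comm
    _ = ∑ p ∈ P, ∑ c ∈ D', ∑ h ∈ H', ∑ h' ∈ H', ∑ q, G c h h' q p := Finset.sum_comm

private lemma aux_factor {β γ : Type*} [Fintype γ] (H' : Finset β) (w : γ → ℝ)
    (I1 : β → ℝ) (I2 : γ → β → ℝ) :
    ∑ h ∈ H', ∑ h' ∈ H', ∑ q, w q * (I1 h' * I2 q h)
      = ∑ q, w q * ((∑ h' ∈ H', I1 h') * (∑ h ∈ H', I2 q h)) := by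
  calc ∑ h ∈ H', ∑ h' ∈ H', ∑ q, w q * (I1 h' * I2 q h)
      = ∑ h ∈ H', ∑ q, ∑ h' ∈ H', w q * (I1 h' * I2 q h) :=
        Finset.sum_congr rfl fun h _ => Finset.sum_comm
    _ = ∑ q, ∑ h ∈ H', ∑ h' ∈ H', w q * (I1 h' * I2 q h) := Finset.sum_comm
    _ = ∑ q, ∑ h' ∈ H', ∑ h ∈ H', w q * (I1 h' * I2 q h) :=
        Finset.sum_congr rfl fun q _ => Finset.sum_comm
    _ = ∑ q, w q * ((∑ h' ∈ H', I1 h') * (∑ h ∈ H', I2 q h)) := by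
        refine Finset.sum_congr rfl fun q _ => ?_
        rw [Finset.sum_mul_sum, Finset.mul_sum]
        exact Finset.sum_congr rfl fun h' _ => (Finset.mul_sum _ _ _).symm

/-- Soundness arithmetization for the unique games instance `Γ(C,𝒯)`: if the labelling
`ℓ : D → H` satisfies a `θ` fraction of the constraints
`ℓ(c+q+h) − ℓ(c+h') = h − h'`, then `θ = ∑_{p∈H} ⟨f_p, G f_p⟩` where
`f_p(c) = E_{h∈H}[1[ℓ(c+h) = p+h]]`; moreover each `f_p` is `[0,1]`-valued and has mean
`1/|H|`. -/
theorem stmt18 {N : ℕ} (C : Submodule (ZMod 2) (Word N))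
    (w : Word N → ℝ) (hw0 : ∀ q, 0 ≤ w q) (hw1 : ∑ q, w q = 1)
    (hsupp : ∀ q, w q ≠ 0 → q ∈ dualSet (C : Set (Word N)))
    (H : AddSubgroup (Word N))
    (hHsub : (H : Set (Word N)) ⊆ dualSet (C : Set (Word N)))
    (ℓ : Word N → Word N) (hℓ : ∀ c, ℓ c ∈ H)
    (f : Word N → Word N → ℝ)
    (hf : ∀ p c, f p c =
      (∑ h ∈ grpFinset H, if ℓ (c + h) = p + h then (1 : ℝ) else 0) /
        ((grpFinset H).card : ℝ))
    (θ : ℝ)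
    (hθ : θ = (∑ c ∈ dualFinset (C : Set (Word N)), ∑ h ∈ grpFinset H,
        ∑ h' ∈ grpFinset H, ∑ q,
          w q * (if ℓ (c + q + h) - ℓ (c + h') = h - h' then (1 : ℝ) else 0)) /
        (((dualFinset (C : Set (Word N))).card : ℝ) * ((grpFinset H).card : ℝ) *
          ((grpFinset H).card : ℝ))) :
    θ = (∑ p ∈ grpFinset H,
          (∑ c ∈ dualFinset (C : Set (Word N)), f p c * ∑ q, w q * f p (c + q)) /
            ((dualFinset (C : Set (Word N))).card : ℝ)) ∧
    (∀ p c, 0 ≤ f p c ∧ f p c ≤ 1) ∧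
    (∀ p ∈ H,
      (∑ c ∈ dualFinset (C : Set (Word N)), f p c) /
          ((dualFinset (C : Set (Word N))).card : ℝ)
        = 1 / ((grpFinset H).card : ℝ)) := by
  classical
  have hself : ∀ x : Word N, x + x = 0 := by
    intro x; funext i; exact CharTwo.add_self_eq_zero (x i)
  have hHmem : ∀ x : Word N, x ∈ grpFinset H ↔ x ∈ H := by
    intro x; simp [grpFinset]
  have hDmem : ∀ x : Word N,
      x ∈ dualFinset (C : Set (Word N)) ↔ x ∈ dualSet (C : Set (Word N)) := by
    intro x; simp [dualFinset]
  have h0D : (0 : Word N) ∈ dualFinset (C : Set (Word N)) := by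
    rw [hDmem]; intro c hc; simp
  have hDadd : ∀ x ∈ dualSet (C : Set (Word N)), ∀ y ∈ dualSet (C : Set (Word N)),
      x + y ∈ dualSet (C : Set (Word N)) := by
    intro x hx y hy c hc
    simp only [dualSet, Set.mem_setOf_eq] at hx hy ⊢
    simp only [Pi.add_apply, mul_add, Finset.sum_add_distrib, hx c hc, hy c hc, add_zero]
  have hHpos : 0 < ((grpFinset H).card : ℝ) := by
    have : (0 : Word N) ∈ grpFinset H := (hHmem 0).2 H.zero_mem
    exact_mod_cast Finset.card_pos.2 ⟨0, this⟩
  have hDpos : 0 < ((dualFinset (C : Set (Word N))).card : ℝ) := by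
    exact_mod_cast Finset.card_pos.2 ⟨0, h0D⟩
  refine ⟨?_, ?_, ?_⟩
  · -- part 1
    have key : ∀ (c h q : Word N), ∀ h' ∈ grpFinset H,
        (if ℓ (c + q + h) - ℓ (c + h') = h - h' then (1 : ℝ) else 0)
          = ∑ p ∈ grpFinset H,
              (if ℓ (c + h') = p + h' then (1 : ℝ) else 0) *
                (if ℓ (c + q + h) = p + h then (1 : ℝ) else 0) := by
      intro c h q h' hh'
      have hstep : ∀ p : Word N,
          (if ℓ (c + h') = p + h' then (1 : ℝ) else 0) *
              (if ℓ (c + q + h) = p + h then (1 : ℝ) else 0)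
            = if ℓ (c + h') - h' = p then
                (if ℓ (c + q + h) = p + h then (1 : ℝ) else 0) else 0 := by
        intro p
        by_cases hc1 : ℓ (c + h') = p + h'
        · have hp : ℓ (c + h') - h' = p := by rw [hc1]; abel
          simp [hc1, hp]
        · have hp : ℓ (c + h') - h' ≠ p := by
            intro e; apply hc1; rw [← e]; abel
          simp [hc1, hp]
      rw [Finset.sum_congr rfl fun p _ => hstep p, Finset.sum_ite_eq]
      have hmem : ℓ (c + h') - h' ∈ grpFinset H :=
        (hHmem _).2 (H.sub_mem (hℓ _) ((hHmem _).1 hh'))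
      rw [if_pos hmem]
      refine if_congr ?_ rfl rfl
      rw [sub_eq_iff_eq_add]
      constructor <;> intro e <;> rw [e] <;> abel
    have hprod : ∀ p c : Word N,
        ((∑ h ∈ grpFinset H, if ℓ (c + h) = p + h then (1 : ℝ) else 0) /
            ((grpFinset H).card : ℝ)) *
          ∑ q, w q * ((∑ h ∈ grpFinset H, if ℓ (c + q + h) = p + h then (1 : ℝ) else 0) /
            ((grpFinset H).card : ℝ))
        = (∑ q, w q * ((∑ h' ∈ grpFinset H, if ℓ (c + h') = p + h' then (1 : ℝ) else 0) *
            (∑ h ∈ grpFinset H, if ℓ (c + q + h) = p + h then (1 : ℝ) else 0)))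
          / (((grpFinset H).card : ℝ) * ((grpFinset H).card : ℝ)) := by
      intro p c
      rw [show (∑ q, w q * ((∑ h ∈ grpFinset H,
            if ℓ (c + q + h) = p + h then (1 : ℝ) else 0) / ((grpFinset H).card : ℝ)))
          = (∑ q, w q * (∑ h ∈ grpFinset H,
              if ℓ (c + q + h) = p + h then (1 : ℝ) else 0)) / ((grpFinset H).card : ℝ) by
        rw [Finset.sum_div]
        exact Finset.sum_congr rfl fun q _ => (mul_div_assoc _ _ _).symm]
      rw [div_mul_div_comm]
      congr 1
      rw [Finset.mul_sum]
      exact Finset.sum_congr rfl fun q _ => by ring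
    have hnum : (∑ c ∈ dualFinset (C : Set (Word N)), ∑ h ∈ grpFinset H,
          ∑ h' ∈ grpFinset H, ∑ q,
            w q * (if ℓ (c + q + h) - ℓ (c + h') = h - h' then (1 : ℝ) else 0))
        = ∑ p ∈ grpFinset H, ∑ c ∈ dualFinset (C : Set (Word N)), ∑ q,
            w q * ((∑ h' ∈ grpFinset H, if ℓ (c + h') = p + h' then (1 : ℝ) else 0) *
              (∑ h ∈ grpFinset H, if ℓ (c + q + h) = p + h then (1 : ℝ) else 0)) := by
      calc (∑ c ∈ dualFinset (C : Set (Word N)), ∑ h ∈ grpFinset H,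
            ∑ h' ∈ grpFinset H, ∑ q,
              w q * (if ℓ (c + q + h) - ℓ (c + h') = h - h' then (1 : ℝ) else 0))
          = ∑ c ∈ dualFinset (C : Set (Word N)), ∑ h ∈ grpFinset H,
              ∑ h' ∈ grpFinset H, ∑ q, ∑ p ∈ grpFinset H,
                w q * ((if ℓ (c + h') = p + h' then (1 : ℝ) else 0) *
                  (if ℓ (c + q + h) = p + h then (1 : ℝ) else 0)) := by
            refine Finset.sum_congr rfl fun c _ => Finset.sum_congr rfl fun h _ =>
              Finset.sum_congr rfl fun h' hh' => Finset.sum_congr rfl fun q _ => ?_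
            rw [key c h q h' hh', Finset.mul_sum]
        _ = ∑ p ∈ grpFinset H, ∑ c ∈ dualFinset (C : Set (Word N)), ∑ h ∈ grpFinset H,
              ∑ h' ∈ grpFinset H, ∑ q,
                w q * ((if ℓ (c + h') = p + h' then (1 : ℝ) else 0) *
                  (if ℓ (c + q + h) = p + h then (1 : ℝ) else 0)) :=
            aux_swap5 _ _ _ _
        _ = ∑ p ∈ grpFinset H, ∑ c ∈ dualFinset (C : Set (Word N)), ∑ q,
              w q * ((∑ h' ∈ grpFinset H, if ℓ (c + h') = p + h' then (1 : ℝ) else 0) *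
                (∑ h ∈ grpFinset H, if ℓ (c + q + h) = p + h then (1 : ℝ) else 0)) :=
            Finset.sum_congr rfl fun p _ => Finset.sum_congr rfl fun c _ =>
              aux_factor _ _ _ _
    simp only [hf]
    rw [hθ, hnum]
    simp only [hprod]
    simp only [div_div, ← Finset.sum_div]
    congr 1
    ring
  · -- part 2
    intro p c
    rw [hf]
    constructor
    · apply div_nonneg _ hHpos.le
      exact Finset.sum_nonneg fun h _ => by split <;> norm_num
    · rw [div_le_one hHpos]
      calc (∑ h ∈ grpFinset H, if ℓ (c + h) = p + h then (1 : ℝ) else 0)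
          ≤ ∑ h ∈ grpFinset H, (1 : ℝ) :=
            Finset.sum_le_sum fun h _ => by split <;> norm_num
        _ = ((grpFinset H).card : ℝ) := by simp
  · -- part 3
    intro p hp
    have hsum : (∑ c ∈ dualFinset (C : Set (Word N)), ∑ h ∈ grpFinset H,
          if ℓ (c + h) = p + h then (1 : ℝ) else 0)
        = ((dualFinset (C : Set (Word N))).card : ℝ) := by
      rw [Finset.sum_comm]
      have h1 : ∀ h ∈ grpFinset H,
          (∑ c ∈ dualFinset (C : Set (Word N)),
            if ℓ (c + h) = p + h then (1 : ℝ) else 0)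
          = ∑ c ∈ dualFinset (C : Set (Word N)),
              if ℓ c = p + h then (1 : ℝ) else 0 := by
        intro h hh
        have hhD : h ∈ dualSet (C : Set (Word N)) := hHsub ((hHmem h).1 hh)
        refine Finset.sum_equiv (Equiv.addRight h) (fun c => ?_) (fun c _ => ?_)
        · simp only [Equiv.coe_addRight, hDmem]
          constructor
          · intro hc; exact hDadd c hc h hhD
          · intro hc
            have := hDadd _ hc h hhD
            rwa [add_assoc, hself, add_zero] at this
        · simp [Equiv.coe_addRight]; congr 1
      rw [Finset.sum_congr rfl h1, Finset.sum_comm]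
      have h2 : ∀ c : Word N, c ∈ dualFinset (C : Set (Word N)) →
          (∑ h ∈ grpFinset H, if ℓ c = p + h then (1 : ℝ) else 0) = 1 := by
        intro c _
        have : ∀ h : Word N, (ℓ c = p + h) ↔ (ℓ c - p = h) := by
          intro h
          rw [sub_eq_iff_eq_add]
          constructor <;> intro e <;> rw [e] <;> abel
        simp only [this]
        rw [Finset.sum_ite_eq]
        rw [if_pos ((hHmem _).2 (H.sub_mem (hℓ c) hp))]
      rw [Finset.sum_congr rfl h2]
      simp
    simp only [hf]
    rw [← Finset.sum_div, hsum]
    rw [div_div]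
    rw [div_eq_div_iff (mul_pos hHpos hDpos).ne' hHpos.ne']
    ring
end

section
/- Let S ⊆ GF(2)^n with 0 ∈ S and |S+S| < 1.2·|S|, where S+S = {a+b : a,b ∈ S}. Then S+S is a linear subspace of GF(2)^n. -/
open scoped Pointwise

/-- If `S ⊆ GF(2)^n` contains `0` and `|S+S| < 1.2 |S|`, then the sumset `S+S` is a
linear subspace of `GF(2)^n`. -/
theorem stmt19 {n : ℕ} (S : Finset (Fin n → ZMod 2))
    (h0 : (0 : Fin n → ZMod 2) ∈ S)
    (hcard : ((S + S).card : ℝ) < 1.2 * (S.card : ℝ)) :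
    ∃ V : Submodule (ZMod 2) (Fin n → ZMod 2),
      (↑(S + S) : Set (Fin n → ZMod 2)) = (V : Set (Fin n → ZMod 2)) := by
  classical
  have addself : ∀ v : Fin n → ZMod 2, v + v = 0 := by
    intro v; funext i; exact CharTwo.add_self_eq_zero (v i)
  have hS : S ⊆ S + S := by
    intro x hx
    rw [Finset.mem_add]
    exact ⟨x, hx, 0, h0, by simp⟩
  set k : ℕ := (S + S).card - S.card with hk
  have hk' : (S + S).card = S.card + k := by
    have := Finset.card_le_card hS; omega
  have h5k : 5 * k < S.card := by
    have hc2 : (((S.card + k : ℕ)) : ℝ) < 1.2 * S.card := by rw [← hk']; exact hcard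
    push_cast at hc2
    have h2 : (5 : ℝ) * k < S.card := by linarith
    exact_mod_cast h2
  -- Lemma A
  have lemA : ∀ a ∈ S, S.card ≤ (S.filter (fun c => a + c ∈ S)).card + k := by
    intro a ha
    have hpart := Finset.card_filter_add_card_filter_not
      (s := S) (p := fun c => a + c ∈ S)
    have hE : (S.filter (fun c => ¬ a + c ∈ S)).card ≤ k := by
      have hinj : ∀ c ∈ S.filter (fun c => ¬ a + c ∈ S), a + c ∈ (S + S) \ S := by
        intro c hc
        rw [Finset.mem_filter] at hc
        rw [Finset.mem_sdiff]
        exact ⟨Finset.mem_add.2 ⟨a, ha, c, hc.1, rfl⟩, hc.2⟩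
      have := Finset.card_le_card_of_injOn (fun c => a + c) hinj
        (fun u _ v _ h => add_left_cancel h)
      have hsd : ((S + S) \ S).card = k := by
        rw [Finset.card_sdiff_of_subset hS]
      omega
    omega
  -- Lemma B
  have lemB : ∀ x ∈ S + S, S.card ≤ (S.filter (fun s => x + s ∈ S)).card + 2 * k := by
    intro x hx
    obtain ⟨a, ha, b, hb, rfl⟩ := Finset.mem_add.1 hx
    set Sa := S.filter (fun c => a + c ∈ S) with hSa
    set Sb := S.filter (fun c => b + c ∈ S) with hSb
    set S' := Sb.image (fun c => b + c) with hS'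
    have hS'sub : S' ⊆ S := by
      intro u hu
      obtain ⟨t, ht, rfl⟩ := Finset.mem_image.1 hu
      exact (Finset.mem_filter.1 ht).2
    have hS'card : S'.card = Sb.card :=
      Finset.card_image_of_injective _ (fun u v h => add_left_cancel h)
    have hIU := Finset.card_inter_add_card_union Sa S'
    have hUsub : (Sa ∪ S').card ≤ S.card := by
      apply Finset.card_le_card
      intro u hu
      rcases Finset.mem_union.1 hu with h | h
      · exact (Finset.mem_filter.1 h).1
      · exact hS'sub h
    -- map u ↦ b + u from Sa ∩ S' into D_x
    have hmap : ∀ u ∈ Sa ∩ S', b + u ∈ S.filter (fun s => a + b + s ∈ S) := by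
      intro u hu
      rw [Finset.mem_inter] at hu
      obtain ⟨hu1, hu2⟩ := hu
      obtain ⟨t, ht, rfl⟩ := Finset.mem_image.1 hu2
      have hbu : b + (b + t) = t := by rw [← add_assoc, addself b, zero_add]
      rw [Finset.mem_filter]
      constructor
      · rw [hbu]; exact (Finset.mem_filter.1 ht).1
      · have : a + b + (b + (b + t)) = a + (b + t) := by rw [hbu, add_assoc]
        rw [this]
        exact (Finset.mem_filter.1 hu1).2
    have hcardmap : (Sa ∩ S').card ≤ (S.filter (fun s => a + b + s ∈ S)).card :=
      Finset.card_le_card_of_injOn (fun u => b + u) hmap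
        (fun u _ v _ h => add_left_cancel h)
    have hA : S.card ≤ Sa.card + k := hSa ▸ lemA a ha
    have hB : S.card ≤ Sb.card + k := hSb ▸ lemA b hb
    omega
  -- closure under addition
  have hclosed : ∀ x ∈ S + S, ∀ y ∈ S + S, x + y ∈ S + S := by
    intro x hx y hy
    set Dx := S.filter (fun s => x + s ∈ S) with hDx
    set Dy := S.filter (fun s => y + s ∈ S) with hDy
    have hIU := Finset.card_inter_add_card_union Dx Dy
    have hUsub : (Dx ∪ Dy).card ≤ S.card := by
      apply Finset.card_le_card
      intro u hu
      rcases Finset.mem_union.1 hu with h | h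
      · exact (Finset.mem_filter.1 h).1
      · exact (Finset.mem_filter.1 h).1
    have hX : S.card ≤ Dx.card + 2 * k := hDx ▸ lemB x hx
    have hY : S.card ≤ Dy.card + 2 * k := hDy ▸ lemB y hy
    have : 0 < (Dx ∩ Dy).card := by omega
    obtain ⟨s, hs⟩ := Finset.card_pos.1 this
    rw [Finset.mem_inter] at hs
    have hxs : x + s ∈ S := (Finset.mem_filter.1 hs.1).2
    have hys : y + s ∈ S := (Finset.mem_filter.1 hs.2).2
    have : (x + s) + (y + s) = x + y := by
      have : (x + s) + (y + s) = (x + y) + (s + s) := by ring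
      rw [this, addself s, add_zero]
    rw [← this]
    exact Finset.mem_add.2 ⟨x + s, hxs, y + s, hys, rfl⟩
  refine ⟨{ carrier := ↑(S + S)
            add_mem' := fun {x y} hx hy =>
              Finset.mem_coe.2 (hclosed x (Finset.mem_coe.1 hx) y (Finset.mem_coe.1 hy))
            zero_mem' := Finset.mem_coe.2 (hS h0)
            smul_mem' := ?_ }, rfl⟩
  intro c x hx
  have hc : c = 0 ∨ c = 1 := by revert c; decide
  rcases hc with rfl | rfl
  · rw [zero_smul]; exact Finset.mem_coe.2 (hS h0)
  · rw [one_smul]; exact hx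
end
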